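/- arXiv:2207.12983 — 3 statements merged into one kernel-verified Lean document; each statement's English description precedes it below -/
import Mathlib

section
/- Let A be a Hopf algebra over a field k. Equip A ⊗_k A with the left A-module structure induced by the comultiplication, a · (x ⊗ y) := Σ a⁽¹⁾x ⊗ a⁽²⁾y. Then A ⊗_k A is a free left A-module, and for any k-basis 𝔸 of A the set {1 ⊗ b | b ∈ 𝔸} is an A-basis of A ⊗_k A. -/
open TensorProduct Coalgebra HopfAlgebra

noncomputable section AuxComulFree

variable (k A : Type*) [Field k] [Ring A] [HopfAlgebra k A]

/-- `x ⊗ y ↦ Δ(x) * (1 ⊗ y)`. -/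
def auxComulF : A ⊗[k] A →ₗ[k] A ⊗[k] A :=
  TensorProduct.lift <|
    ((LinearMap.mul k (A ⊗[k] A)).comp (Bialgebra.comulAlgHom k A).toLinearMap).compl₂
      (TensorProduct.mk k A A 1)

/-- `x ⊗ y ↦ ((id ⊗ S) Δ(x)) * (1 ⊗ y)`. -/
def auxComulG : A ⊗[k] A →ₗ[k] A ⊗[k] A :=
  TensorProduct.lift <|
    ((LinearMap.mul k (A ⊗[k] A)).comp
      ((antipode (R := k) (A := A)).lTensor A ∘ₗ (Coalgebra.comul : A →ₗ[k] A ⊗[k] A))).compl₂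
      (TensorProduct.mk k A A 1)

variable {k A}

lemma auxComulF_tmul (x y : A) :
    auxComulF k A (x ⊗ₜ[k] y) = Coalgebra.comul x * ((1 : A) ⊗ₜ[k] y) := by
  simp [auxComulF]

lemma auxComulG_tmul (x y : A) :
    auxComulG k A (x ⊗ₜ[k] y) =
      (antipode (R := k) (A := A)).lTensor A (Coalgebra.comul x) * ((1 : A) ⊗ₜ[k] y) := by
  simp [auxComulG]

lemma sum_counit_smul {x : A} {κ : Type*} (r : Coalgebra.Repr k x κ) :
    ∑ i ∈ r.index, Coalgebra.counit (R := k) (r.right i) • r.left i = x := by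
  have h := congrArg (TensorProduct.rid k A) (Coalgebra.sum_tmul_counit_eq r)
  simpa only [map_sum, TensorProduct.rid_tmul, one_smul] using h

lemma auxComulGF (x y : A) : auxComulG k A (auxComulF k A (x ⊗ₜ[k] y)) = x ⊗ₜ[k] y := by
  set r := ℛ k x with hr
  set r1 : (i : A × A) → Coalgebra.Repr k (r.left i) (A × A) := fun i => ℛ k (r.left i) with hr1
  set r2 : (i : A × A) → Coalgebra.Repr k (r.right i) (A × A) := fun i => ℛ k (r.right i) with hr2
  have h1 : auxComulF k A (x ⊗ₜ[k] y) = ∑ i ∈ r.index, r.left i ⊗ₜ[k] (r.right i * y) := by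
    rw [auxComulF_tmul, ← r.eq, Finset.sum_mul]
    simp [Algebra.TensorProduct.tmul_mul_tmul]
  have h2 : auxComulG k A (auxComulF k A (x ⊗ₜ[k] y)) =
      ∑ i ∈ r.index, ∑ j ∈ (r1 i).index,
        (r1 i).left j ⊗ₜ[k] (antipode (R := k) ((r1 i).right j) * (r.right i * y)) := by
    rw [h1, map_sum]
    refine Finset.sum_congr rfl fun i _ => ?_
    rw [auxComulG_tmul, ← (r1 i).eq, map_sum, Finset.sum_mul]
    simp [Algebra.TensorProduct.tmul_mul_tmul]
  have key := Coalgebra.sum_tmul_tmul_eq r r1 r2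
  have key2 := congrArg (LinearMap.lTensor A
      (LinearMap.mul' k A ∘ₗ (antipode (R := k) (A := A)).rTensor A ∘ₗ
        (LinearMap.mulRight k y).lTensor A)) key
  simp only [map_sum, LinearMap.lTensor_tmul, LinearMap.coe_comp, Function.comp_apply,
    LinearMap.rTensor_tmul, LinearMap.mul'_apply, LinearMap.mulRight_apply] at key2
  rw [h2, key2]
  have h3 : ∀ i ∈ r.index, (∑ j ∈ (r2 i).index,
      r.left i ⊗ₜ[k] (antipode (R := k) ((r2 i).left j) * ((r2 i).right j * y)))
      = (Coalgebra.counit (R := k) (r.right i) • r.left i) ⊗ₜ[k] y := by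
    intro i _
    rw [← TensorProduct.tmul_sum]
    simp_rw [← mul_assoc]
    rw [← Finset.sum_mul, HopfAlgebra.sum_antipode_mul_eq_smul (r2 i), smul_mul_assoc, one_mul,
      tmul_smul, smul_tmul']
  rw [Finset.sum_congr rfl h3, ← TensorProduct.sum_tmul, _root_.sum_counit_smul r]

lemma auxComulFG (x y : A) : auxComulF k A (auxComulG k A (x ⊗ₜ[k] y)) = x ⊗ₜ[k] y := by
  set r := ℛ k x with hr
  set r1 : (i : A × A) → Coalgebra.Repr k (r.left i) (A × A) := fun i => ℛ k (r.left i) with hr1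
  set r2 : (i : A × A) → Coalgebra.Repr k (r.right i) (A × A) := fun i => ℛ k (r.right i) with hr2
  have h1 : auxComulG k A (x ⊗ₜ[k] y) =
      ∑ i ∈ r.index, r.left i ⊗ₜ[k] (antipode (R := k) (r.right i) * y) := by
    rw [auxComulG_tmul, ← r.eq, map_sum, Finset.sum_mul]
    simp [Algebra.TensorProduct.tmul_mul_tmul]
  have h2 : auxComulF k A (auxComulG k A (x ⊗ₜ[k] y)) =
      ∑ i ∈ r.index, ∑ j ∈ (r1 i).index,
        (r1 i).left j ⊗ₜ[k] ((r1 i).right j * (antipode (R := k) (r.right i) * y)) := by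
    rw [h1, map_sum]
    refine Finset.sum_congr rfl fun i _ => ?_
    rw [auxComulF_tmul, ← (r1 i).eq, Finset.sum_mul]
    simp [Algebra.TensorProduct.tmul_mul_tmul]
  have key := Coalgebra.sum_tmul_tmul_eq r r1 r2
  have key2 := congrArg (LinearMap.lTensor A
      (LinearMap.mul' k A ∘ₗ
        ((LinearMap.mulRight k y).comp (antipode (R := k) (A := A))).lTensor A)) key
  simp only [map_sum, LinearMap.lTensor_tmul, LinearMap.coe_comp, Function.comp_apply,
    LinearMap.mul'_apply, LinearMap.mulRight_apply] at key2
  rw [h2, key2]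
  have h3 : ∀ i ∈ r.index, (∑ j ∈ (r2 i).index,
      r.left i ⊗ₜ[k] ((r2 i).left j * (antipode (R := k) ((r2 i).right j) * y)))
      = (Coalgebra.counit (R := k) (r.right i) • r.left i) ⊗ₜ[k] y := by
    intro i _
    rw [← TensorProduct.tmul_sum]
    simp_rw [← mul_assoc]
    rw [← Finset.sum_mul, HopfAlgebra.sum_mul_antipode_eq_smul (r2 i), smul_mul_assoc, one_mul,
      tmul_smul, smul_tmul']
  rw [Finset.sum_congr rfl h3, ← TensorProduct.sum_tmul, _root_.sum_counit_smul r]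

lemma auxComulGF' (z : A ⊗[k] A) : auxComulG k A (auxComulF k A z) = z := by
  induction z using TensorProduct.induction_on with
  | zero => simp
  | tmul x y => exact auxComulGF x y
  | add u v hu hv => simp [map_add, hu, hv]

lemma auxComulFG' (z : A ⊗[k] A) : auxComulF k A (auxComulG k A z) = z := by
  induction z using TensorProduct.induction_on with
  | zero => simp
  | tmul x y => exact auxComulFG x y
  | add u v hu hv => simp [map_add, hu, hv]

variable (k A)

/-- Type synonym for `A ⊗[k] A` with the `A`-module structure coming from comultiplication. -/
def CoTensor : Type _ := A ⊗[k] A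

instance : AddCommGroup (CoTensor k A) := inferInstanceAs (AddCommGroup (A ⊗[k] A))

instance : Module A (CoTensor k A) :=
  Module.compHom (A ⊗[k] A) (Bialgebra.comulAlgHom k A).toRingHom

/-- The `A`-linear equivalence between `A ⊗[k] A` (with the module structure on the left factor)
and `CoTensor k A`. -/
def auxComulEquiv : (A ⊗[k] A) ≃ₗ[A] CoTensor k A where
  toFun := auxComulF k A
  map_add' := map_add _
  invFun := auxComulG k A
  left_inv := auxComulGF'
  right_inv := auxComulFG'
  map_smul' := fun a z => by
    show auxComulF k A (a • z) = (Bialgebra.comulAlgHom k A a * auxComulF k A z : A ⊗[k] A)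
    induction z using TensorProduct.induction_on with
    | zero => rw [smul_zero, map_zero, mul_zero]
    | tmul x y =>
        rw [TensorProduct.smul_tmul', smul_eq_mul, auxComulF_tmul, auxComulF_tmul,
          Bialgebra.comulAlgHom_apply, Bialgebra.comul_mul, mul_assoc]
    | add u v hu hv => rw [smul_add, map_add, map_add, mul_add, hu, hv]

variable {ι : Type*}

/-- The claimed basis. -/
def auxComulBasis (𝔸 : Module.Basis ι k A) : Module.Basis ι A (CoTensor k A) :=
  (𝔸.baseChange A).map (auxComulEquiv k A)

lemma auxComulBasis_apply (𝔸 : Module.Basis ι k A) (i : ι) :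
    auxComulBasis k A 𝔸 i = (show CoTensor k A from (1 : A) ⊗ₜ[k] 𝔸 i) := by
  show auxComulF k A (𝔸.baseChange A i) = _
  rw [Module.Basis.baseChange_apply, auxComulF_tmul]
  show Coalgebra.comul (R := k) (1 : A) * _ = _
  rw [Bialgebra.comul_one, one_mul]

end AuxComulFree

/-- Let `A` be a Hopf algebra over a field `k`. Equip `A ⊗[k] A` with the left
`A`-module structure induced by the comultiplication, `a • (x ⊗ y) = Σ a⁽¹⁾x ⊗ a⁽²⁾y`
(i.e. restriction of scalars along the algebra map `Δ : A → A ⊗[k] A`).  Then `A ⊗[k] A`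
is a free left `A`-module, and for any `k`-basis `𝔸` of `A` the family `{1 ⊗ b | b ∈ 𝔸}`
is an `A`-basis of `A ⊗[k] A`. -/
theorem tensor_free_over_comul
    (k A : Type*) [Field k] [Ring A] [HopfAlgebra k A]
    {ι : Type*} (𝔸 : Module.Basis ι k A) :
    ∃ b : @Module.Basis ι A (A ⊗[k] A) _ _
        (Module.compHom (A ⊗[k] A) (Bialgebra.comulAlgHom k A).toRingHom),
      ∀ i : ι,
        @DFunLike.coe _ _ _
          (@Module.Basis.instFunLike ι A (A ⊗[k] A) _ _
            (Module.compHom (A ⊗[k] A) (Bialgebra.comulAlgHom k A).toRingHom)) b i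
          = (1 : A) ⊗ₜ[k] 𝔸 i := by
  exact ⟨auxComulBasis k A 𝔸, fun i => auxComulBasis_apply k A 𝔸 i⟩
end

section
/- Let A be an algebra over a field k and G a finite group acting on A by k-algebra automorphisms, with char k not dividing |G|. Let M be an A-A-bimodule equipped with a G-equivariant structure, i.e. A-A-bimodule isomorphisms α_g : M → M^g for all g ∈ G satisfying α_{hg} = (α_h)^g ∘ α_g (where (α_h)^g denotes the same underlying linear map viewed as a map M^g → (M^h)^g = M^{hg}). Define E : ⊕_{g∈G} M^g → ⊕_{g∈G} M^g by (E((m_t)_{t∈G}))_s := (1/|G|) Σ_{t∈G} (α_{st⁻¹})^t(m_t), and define ᾱ : M → ⊕_{g∈G} M^g by m ↦ (α_g(m))_{g∈G}. Then E is an idempotent endomorphism of the A-A-bimodule ⊕_{g∈G} M^g, ᾱ is an injective homomorphism of A-A-bimodules, the image of ᾱ is contained in the image of E, and ᾱ induces an isomorphism of A-A-bimodules from M onto E(⊕_{g∈G} M^g). -/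
open TensorProduct

section

variable (k A : Type*) [Field k] [Ring A] [Algebra k A]

/-- Let `A` be a `k`-algebra, `G` a finite group acting on `A` by `k`-algebra
automorphisms (via `ρ`), with `char k ∤ |G|`.  Let `M` be an `A`-`A`-bimodule with a
`G`-equivariant structure `α_g : M ≅ M^g` (bimodule isos satisfying the cocycle condition
`α_{hg} = (α_h)^g ∘ α_g`).  Define `E : ⊕_g M^g → ⊕_g M^g` by
`(E f)_s = (1/|G|) Σ_t α_{st⁻¹}(f t)` and `ᾱ : M → ⊕_g M^g` by `m ↦ (α_g m)_g`.  Then `E` is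
an idempotent endomorphism of the `A`-`A`-bimodule `⊕_g M^g` (whose component `g` carries the
`g`-twisted actions `(a • f) g = ρ g a • f g` and `(f • b) g = f g • ρ g b`), `ᾱ` is an
injective homomorphism of `A`-`A`-bimodules, the image of `ᾱ` is contained in the image of
`E`, and `ᾱ` induces an isomorphism of `A`-`A`-bimodules from `M` onto `E(⊕_g M^g)`. -/
theorem averaging_idempotent_and_equivariant_embedding
    (G : Type*) [Group G] [Fintype G]
    (hchar : (Fintype.card G : k) ≠ 0)
    (ρ : G →* (A ≃ₐ[k] A))
    (M : Type*) [AddCommGroup M] [Module k M]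
    [Module A M] [Module Aᵐᵒᵖ M] [IsScalarTower k A M] [IsScalarTower k Aᵐᵒᵖ M]
    [SMulCommClass A Aᵐᵒᵖ M]
    (α : G → (M ≃ₗ[k] M))
    (hαl : ∀ (g : G) (a : A) (m : M), α g (a • m) = ρ g a • α g m)
    (hαr : ∀ (g : G) (b : A) (m : M),
      α g (MulOpposite.op b • m) = MulOpposite.op (ρ g b) • α g m)
    (hcoc : ∀ (h g : G) (m : M), α (h * g) m = α h (α g m)) :
    let E : (G → M) → (G → M) :=
      fun f s => (Fintype.card G : k)⁻¹ • ∑ t : G, α (s * t⁻¹) (f t)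
    let abar : M → (G → M) := fun m g => α g m
    -- `E` is idempotent
    (∀ f, E (E f) = E f) ∧
    -- `E` is an `A`-`A`-bimodule endomorphism of `⊕_g M^g`
    (∀ f₁ f₂, E (f₁ + f₂) = E f₁ + E f₂) ∧
    (∀ (c : k) (f), E (c • f) = c • E f) ∧
    (∀ (a : A) (f), E (fun g => ρ g a • f g) = fun g => ρ g a • E f g) ∧
    (∀ (b : A) (f), E (fun g => MulOpposite.op (ρ g b) • f g) =
      fun g => MulOpposite.op (ρ g b) • E f g) ∧
    -- `ᾱ` is an injective homomorphism of `A`-`A`-bimodules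
    Function.Injective abar ∧
    (∀ m₁ m₂, abar (m₁ + m₂) = abar m₁ + abar m₂) ∧
    (∀ (c : k) (m), abar (c • m) = c • abar m) ∧
    (∀ (a : A) (m), abar (a • m) = fun g => ρ g a • abar m g) ∧
    (∀ (b : A) (m), abar (MulOpposite.op b • m) = fun g => MulOpposite.op (ρ g b) • abar m g) ∧
    -- image of `ᾱ` is contained in the image of `E`, and `ᾱ` maps `M` onto `E(⊕_g M^g)`
    Set.range abar ⊆ Set.range E ∧
    Set.range abar = Set.range E := by
  intro E abar
  have hone : ∀ m : M, α 1 m = m := by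
    intro m
    have h := hcoc 1 1 m
    rw [one_mul] at h
    exact ((α 1).injective h.symm)
  have hcomp : ∀ (s t : G) (m : M), α (s * t⁻¹) (α t m) = α s m := by
    intro s t m
    rw [← hcoc, inv_mul_cancel_right]
  have hEabar : ∀ m : M, E (abar m) = abar m := by
    intro m
    funext s
    show (Fintype.card G : k)⁻¹ • ∑ t : G, α (s * t⁻¹) (α t m) = α s m
    simp only [hcomp]
    rw [Finset.sum_const, Finset.card_univ, ← Nat.cast_smul_eq_nsmul k,
      inv_smul_smul₀ hchar]
  have hEform : ∀ (f : G → M),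
      E f = abar ((Fintype.card G : k)⁻¹ • ∑ t : G, α t⁻¹ (f t)) := by
    intro f
    funext s
    show (Fintype.card G : k)⁻¹ • ∑ t : G, α (s * t⁻¹) (f t)
      = α s ((Fintype.card G : k)⁻¹ • ∑ t : G, α t⁻¹ (f t))
    rw [map_smul, map_sum]
    congr 1
    refine Finset.sum_congr rfl fun t _ => ?_
    rw [← hcoc]
  refine ⟨?_, ?_, ?_, ?_, ?_, ?_, ?_, ?_, ?_, ?_, ?_, ?_⟩
  · -- idempotent
    intro f
    rw [hEform f, hEabar]
  · intro f₁ f₂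
    funext s
    show (Fintype.card G : k)⁻¹ • ∑ t : G, α (s * t⁻¹) (f₁ t + f₂ t) = _
    simp [map_add, Finset.sum_add_distrib, smul_add]
    rfl
  · intro c f
    funext s
    show (Fintype.card G : k)⁻¹ • ∑ t : G, α (s * t⁻¹) (c • f t) = _
    simp only [map_smul, ← Finset.smul_sum]
    show _ = c • ((Fintype.card G : k)⁻¹ • ∑ t : G, α (s * t⁻¹) (f t))
    rw [smul_comm]
  · intro a f
    funext s
    show (Fintype.card G : k)⁻¹ • ∑ t : G, α (s * t⁻¹) (ρ t a • f t)
      = ρ s a • ((Fintype.card G : k)⁻¹ • ∑ t : G, α (s * t⁻¹) (f t))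
    have key : ∀ t : G, α (s * t⁻¹) (ρ t a • f t) = ρ s a • α (s * t⁻¹) (f t) := by
      intro t
      rw [hαl]
      congr 1
      rw [← AlgEquiv.mul_apply, ← map_mul, inv_mul_cancel_right]
    simp only [key, ← Finset.smul_sum]
    rw [smul_comm]
  · intro b f
    funext s
    show (Fintype.card G : k)⁻¹ • ∑ t : G, α (s * t⁻¹) (MulOpposite.op (ρ t b) • f t)
      = MulOpposite.op (ρ s b) • ((Fintype.card G : k)⁻¹ • ∑ t : G, α (s * t⁻¹) (f t))
    have key : ∀ t : G, α (s * t⁻¹) (MulOpposite.op (ρ t b) • f t)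
        = MulOpposite.op (ρ s b) • α (s * t⁻¹) (f t) := by
      intro t
      rw [hαr]
      congr 2
      rw [← AlgEquiv.mul_apply, ← map_mul, inv_mul_cancel_right]
    simp only [key, ← Finset.smul_sum]
    rw [smul_comm]
  · intro m₁ m₂ h
    have := congrFun h 1
    simp only [abar, hone] at this
    exact this
  · intro m₁ m₂
    funext g
    exact map_add _ _ _
  · intro c m
    funext g
    exact map_smul _ _ _
  · intro a m
    funext g
    exact hαl g a m
  · intro b m
    funext g
    exact hαr g b m
  · rintro _ ⟨m, rfl⟩
    exact ⟨abar m, hEabar m⟩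
  · apply Set.Subset.antisymm
    · rintro _ ⟨m, rfl⟩
      exact ⟨abar m, hEabar m⟩
    · rintro _ ⟨f, rfl⟩
      exact ⟨_, (hEform f).symm⟩

end
end

section
/- Let A be a finite-dimensional algebra over a field k and G a finite group acting on A by k-algebra automorphisms. Assume A has a complete set of primitive, pairwise orthogonal idempotents {e_g | g ∈ G} indexed by G with h(e_g) = e_{g h⁻¹} for all g, h ∈ G, and assume the left A-modules A e_g, g ∈ G, are pairwise non-isomorphic. Suppose ν : G → G is a function such that for every g ∈ G the k-linear dual Hom_k(e_g A, k), with left A-action (a · f)(x) := f(xa), is isomorphic to A e_{ν(g)} as a left A-module. Then ν(g) = ν(1)·g for all g ∈ G. -/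
section

variable (k A : Type*) [Field k] [Ring A] [Algebra k A]

/-- The left ideal `A e` of `A`, as a `k`-subspace. -/
noncomputable def leftIdeal (e : A) : Submodule k A :=
  LinearMap.range (LinearMap.mulRight k e)

/-- The right ideal `e A` of `A`, as a `k`-subspace. -/
noncomputable def rightIdeal (e : A) : Submodule k A :=
  LinearMap.range (LinearMap.mulLeft k e)

/-- Left multiplication by `a` on the left ideal `A e` (the left `A`-action on `A e`). -/
noncomputable def lmulIdeal (e a : A) : leftIdeal k A e →ₗ[k] leftIdeal k A e :=
  (LinearMap.mulLeft k a).restrict (by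
    rintro x ⟨y, rfl⟩
    exact ⟨a * y, by simp [LinearMap.mulRight_apply, mul_assoc]⟩)

/-- Right multiplication by `a` on the right ideal `e A`.  It induces the left `A`-action
`(a · f)(x) = f(x a)` on the `k`-linear dual `Hom_k(eA, k)`. -/
noncomputable def rmulIdeal (e a : A) : rightIdeal k A e →ₗ[k] rightIdeal k A e :=
  (LinearMap.mulRight k a).restrict (by
    rintro x ⟨y, rfl⟩
    exact ⟨y * a, by simp [LinearMap.mulLeft_apply, mul_assoc]⟩)

/-- Restriction of an algebra automorphism to a linear equivalence between two
`k`-subspaces that it exchanges. -/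
noncomputable def restrEquiv (σ : A ≃ₐ[k] A) (p q : Submodule k A)
    (h : ∀ x ∈ p, σ x ∈ q) (h' : ∀ x ∈ q, σ.symm x ∈ p) : p ≃ₗ[k] q where
  toFun x := ⟨σ x, h x x.2⟩
  map_add' x y := by ext; simp
  map_smul' c x := by ext; simp
  invFun x := ⟨σ.symm x, h' x x.2⟩
  left_inv x := by ext; simp
  right_inv x := by ext; simp

@[simp] lemma restrEquiv_coe (σ : A ≃ₐ[k] A) (p q : Submodule k A)
    (h : ∀ x ∈ p, σ x ∈ q) (h' : ∀ x ∈ q, σ.symm x ∈ p) (x : p) :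
    (restrEquiv k A σ p q h h' x : A) = σ x := rfl

@[simp] lemma lmulIdeal_coe (e a : A) (x : leftIdeal k A e) :
    (lmulIdeal k A e a x : A) = a * x := rfl

@[simp] lemma rmulIdeal_coe (e a : A) (x : rightIdeal k A e) :
    (rmulIdeal k A e a x : A) = x * a := rfl

lemma mem_rightIdeal_iff (e x : A) : x ∈ rightIdeal k A e ↔ ∃ z, e * z = x := by
  simp [rightIdeal, LinearMap.mem_range, LinearMap.mulLeft_apply]

lemma mem_leftIdeal_iff (e x : A) : x ∈ leftIdeal k A e ↔ ∃ z, z * e = x := by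
  simp [leftIdeal, LinearMap.mem_range, LinearMap.mulRight_apply]

/-- Let `A` be a finite-dimensional `k`-algebra, `G` a finite group acting on
`A` by `k`-algebra automorphisms (via `ρ`), with a complete set of primitive, pairwise
orthogonal idempotents `{e_g | g ∈ G}` satisfying `h(e_g) = e_{gh⁻¹}`, such that the left
modules `A e_g` are pairwise non-isomorphic.  If `ν : G → G` is such that the left `A`-module
`Hom_k(e_g A, k)` (with action `(a · f)(x) = f(xa)`) is isomorphic to `A e_{ν(g)}` for every
`g`, then `ν(g) = ν(1) g` for all `g`. -/
theorem nakayama_compatible_with_action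
    [FiniteDimensional k A]
    (G : Type*) [Group G] [Fintype G]
    (ρ : G →* (A ≃ₐ[k] A)) (e : G → A)
    (hidem : ∀ g, IsIdempotentElem (e g))
    (horth : ∀ g g', g ≠ g' → e g * e g' = 0)
    (hsum : ∑ g, e g = 1)
    (hprim : ∀ g, ∀ p q : A, IsIdempotentElem p → IsIdempotentElem q →
      p * q = 0 → q * p = 0 → p + q = e g → p = 0 ∨ q = 0)
    (hinv : ∀ g h, ρ h (e g) = e (g * h⁻¹))
    (hnoniso : ∀ g g' : G,
      (∃ φ : leftIdeal k A (e g) ≃ₗ[k] leftIdeal k A (e g'),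
        ∀ (a : A) (x : leftIdeal k A (e g)),
          φ (lmulIdeal k A (e g) a x) = lmulIdeal k A (e g') a (φ x)) → g = g')
    (ν : G → G)
    (hν : ∀ g : G,
      ∃ Θ : (rightIdeal k A (e g) →ₗ[k] k) ≃ₗ[k] leftIdeal k A (e (ν g)),
        ∀ (a : A) (f : rightIdeal k A (e g) →ₗ[k] k),
          Θ (f ∘ₗ rmulIdeal k A (e g) a) = lmulIdeal k A (e (ν g)) a (Θ f)) :
    ∀ g : G, ν g = ν 1 * g := by
  intro g
  obtain ⟨Θ1, hΘ1⟩ := hν 1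
  obtain ⟨Θg, hΘg⟩ := hν g
  set σ : A ≃ₐ[k] A := ρ g with hσ
  have hσsymm : ∀ x : G, σ.symm (e x) = e (x * g) := by
    intro x
    have : σ (e (x * g)) = e x := by rw [hinv]; simp
    rw [← this, AlgEquiv.symm_apply_apply]
  -- S : e_g A ≃ e_1 A, x ↦ σ x
  have hSmem : ∀ x ∈ rightIdeal k A (e g), σ x ∈ rightIdeal k A (e 1) := by
    intro x hx
    obtain ⟨z, rfl⟩ := (mem_rightIdeal_iff k A _ _).1 hx
    exact (mem_rightIdeal_iff k A _ _).2 ⟨σ z, by rw [map_mul, hinv]; simp⟩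
  have hSmem' : ∀ x ∈ rightIdeal k A (e 1), σ.symm x ∈ rightIdeal k A (e g) := by
    intro x hx
    obtain ⟨z, rfl⟩ := (mem_rightIdeal_iff k A _ _).1 hx
    exact (mem_rightIdeal_iff k A _ _).2 ⟨σ.symm z, by rw [map_mul, hσsymm]; simp⟩
  set S : rightIdeal k A (e g) ≃ₗ[k] rightIdeal k A (e 1) :=
    restrEquiv k A σ _ _ hSmem hSmem'
  -- T : A e_{νg} ≃ A e_{νg * g⁻¹}, x ↦ σ x
  have hTmem : ∀ x ∈ leftIdeal k A (e (ν g)), σ x ∈ leftIdeal k A (e (ν g * g⁻¹)) := by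
    intro x hx
    obtain ⟨z, rfl⟩ := (mem_leftIdeal_iff k A _ _).1 hx
    exact (mem_leftIdeal_iff k A _ _).2 ⟨σ z, by rw [map_mul, hinv]⟩
  have hTmem' : ∀ x ∈ leftIdeal k A (e (ν g * g⁻¹)), σ.symm x ∈ leftIdeal k A (e (ν g)) := by
    intro x hx
    obtain ⟨z, rfl⟩ := (mem_leftIdeal_iff k A _ _).1 hx
    exact (mem_leftIdeal_iff k A _ _).2 ⟨σ.symm z, by rw [map_mul, hσsymm]; simp⟩
  set T : leftIdeal k A (e (ν g)) ≃ₗ[k] leftIdeal k A (e (ν g * g⁻¹)) :=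
    restrEquiv k A σ _ _ hTmem hTmem'
  -- D : Hom(e_1 A, k) ≃ Hom(e_g A, k), f ↦ f ∘ S
  set D : (rightIdeal k A (e 1) →ₗ[k] k) ≃ₗ[k] (rightIdeal k A (e g) →ₗ[k] k) :=
    (LinearEquiv.arrowCongr S (LinearEquiv.refl k k)).symm
  have hD : ∀ f : rightIdeal k A (e 1) →ₗ[k] k, ∀ x, D f x = f (S x) := by
    intro f x
    simp [D, LinearEquiv.arrowCongr]
  -- the composite Φ : A e_{ν 1} ≃ A e_{νg * g⁻¹}
  set Φ : leftIdeal k A (e (ν 1)) ≃ₗ[k] leftIdeal k A (e (ν g * g⁻¹)) :=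
    Θ1.symm.trans (D.trans (Θg.trans T))
  have key : ν 1 = ν g * g⁻¹ := by
    apply hnoniso
    refine ⟨Φ, fun a x => ?_⟩
    have step1 : Θ1.symm (lmulIdeal k A (e (ν 1)) a x)
        = (Θ1.symm x) ∘ₗ rmulIdeal k A (e 1) a := by
      rw [LinearEquiv.symm_apply_eq, hΘ1, LinearEquiv.apply_symm_apply]
    have step2 : D ((Θ1.symm x) ∘ₗ rmulIdeal k A (e 1) a)
        = (D (Θ1.symm x)) ∘ₗ rmulIdeal k A (e g) (σ.symm a) := by
      apply LinearMap.ext; intro y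
      rw [hD, LinearMap.comp_apply, LinearMap.comp_apply, hD]
      congr 1
      ext
      simp [S, mul_comm]
    have step4 : T (lmulIdeal k A (e (ν g)) (σ.symm a) (Θg (D (Θ1.symm x))))
        = lmulIdeal k A (e (ν g * g⁻¹)) a (T (Θg (D (Θ1.symm x)))) := by
      ext
      simp [T]
    calc Φ (lmulIdeal k A (e (ν 1)) a x)
        = T (Θg (D (Θ1.symm (lmulIdeal k A (e (ν 1)) a x)))) := rfl
      _ = T (Θg ((D (Θ1.symm x)) ∘ₗ rmulIdeal k A (e g) (σ.symm a))) := by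
          rw [step1, step2]
      _ = T (lmulIdeal k A (e (ν g)) (σ.symm a) (Θg (D (Θ1.symm x)))) := by rw [hΘg]
      _ = lmulIdeal k A (e (ν g * g⁻¹)) a (T (Θg (D (Θ1.symm x)))) := step4
      _ = lmulIdeal k A (e (ν g * g⁻¹)) a (Φ x) := rfl
  rw [key]
  group

end
end
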